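/- arXiv:1411.5044 — 4 statements merged into one kernel-verified Lean document; each statement's English description precedes it below -/
import Mathlib

section
/- Consider one-dimensional Euler states U_j = (ρ_j, ρ_j u_j, E_j) ∈ ℝ³ for j ∈ {e−1, e, e+1} with densities ρ_j > 0. Let the Euler flux be F(U) = (ρu, ρu² + p, u(E + p)) with any pressure values (the claim concerns only the density component, whose flux is ρu), and let F̂_λ(U_L, U_R, n) = (n/2)(F(U_L) + F(U_R)) − (λ/2)(U_R − U_L) be the local Lax–Friedrichs flux. If λ > 0 satisfies λ ≥ |u_j| for all j ∈ {e−1, e, e+1}, and Δt > 0, h > 0 satisfy the CFL condition Δt λ / h ≤ 1/2, then the density component of the three-point update U_e^{Δt} = U_e − (Δt/h)(F̂_λ(U_e, U_{e−1}, −1) + F̂_λ(U_e, U_{e+1}, +1)) equals ρ_e(1 − Δt λ/h) + (Δt/(2h))(ρ_{e−1}(λ + u_{e−1}) + ρ_{e+1}(λ − u_{e+1})) and is strictly positive. -/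
/-- The one-dimensional local Lax–Friedrichs numerical flux with dissipation
coefficient `lam`:  `F̂(U_L, U_R, n) = (n/2)(F U_L + F U_R) − (lam/2)(U_R − U_L)`. -/
noncomputable def llfFlux {m : ℕ} (F : (Fin m → ℝ) → (Fin m → ℝ)) (lam : ℝ)
    (UL UR : Fin m → ℝ) (n : ℝ) : Fin m → ℝ :=
  (n / 2) • (F UL + F UR) - (lam / 2) • (UR - UL)

/-- for one-dimensional Euler states `U_j = (ρ_j, ρ_j u_j, E_j)`
with positive densities, a flux `F` whose density component is `ρ u`, a
dissipation coefficient `λ ≥ |u_j|` for all three states, and the CFL condition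
`Δt λ / h ≤ 1/2`, the density component of the three-point update equals
`ρ_e(1 − Δtλ/h) + (Δt/(2h))(ρ_{e−1}(λ + u_{e−1}) + ρ_{e+1}(λ − u_{e+1}))`
and is strictly positive. -/
theorem density_positivity_three_point
    (ρem ρe ρep uem ue uep Eem Ee Eep lam Δt h : ℝ)
    (hρem : 0 < ρem) (hρe : 0 < ρe) (hρep : 0 < ρep)
    (F : (Fin 3 → ℝ) → (Fin 3 → ℝ))
    (Uem Ue Uep : Fin 3 → ℝ)
    (hUem : Uem = ![ρem, ρem * uem, Eem])
    (hUe : Ue = ![ρe, ρe * ue, Ee])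
    (hUep : Uep = ![ρep, ρep * uep, Eep])
    (hFem : F Uem 0 = ρem * uem)
    (hFe : F Ue 0 = ρe * ue)
    (hFep : F Uep 0 = ρep * uep)
    (hlam : 0 < lam)
    (hlem : |uem| ≤ lam) (hle : |ue| ≤ lam) (hlep : |uep| ≤ lam)
    (hΔt : 0 < Δt) (hh : 0 < h) (hCFL : Δt * lam / h ≤ 1 / 2) :
    (Ue - (Δt / h) • (llfFlux F lam Ue Uem (-1) + llfFlux F lam Ue Uep 1)) 0 =
        ρe * (1 - Δt * lam / h) +
          (Δt / (2 * h)) * (ρem * (lam + uem) + ρep * (lam - uep)) ∧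
      0 < (Ue - (Δt / h) • (llfFlux F lam Ue Uem (-1) + llfFlux F lam Ue Uep 1)) 0 := by
  have key : (Ue - (Δt / h) • (llfFlux F lam Ue Uem (-1) + llfFlux F lam Ue Uep 1)) 0 =
      ρe * (1 - Δt * lam / h) +
        (Δt / (2 * h)) * (ρem * (lam + uem) + ρep * (lam - uep)) := by
    simp only [llfFlux, Pi.sub_apply, Pi.smul_apply, Pi.add_apply, smul_eq_mul,
      hFem, hFe, hFep]
    rw [hUe, hUem, hUep]
    simp [Matrix.cons_val_zero]
    field_simp
    ring
  refine ⟨key, key ▸ ?_⟩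
  have h1 : (0:ℝ) < ρe * (1 - Δt * lam / h) := by
    have : Δt * lam / h ≤ 1 / 2 := hCFL
    nlinarith
  have h2 : (0:ℝ) ≤ (Δt / (2 * h)) * (ρem * (lam + uem) + ρep * (lam - uep)) := by
    have hm := (abs_le.mp hlem).1
    have hp := (abs_le.mp hlep).2
    have ht : (0:ℝ) ≤ Δt / (2 * h) := by positivity
    have h3 : (0:ℝ) ≤ ρem * (lam + uem) := mul_nonneg hρem.le (by linarith)
    have h4 : (0:ℝ) ≤ ρep * (lam - uep) := mul_nonneg hρep.le (by linarith)
    exact mul_nonneg ht (by linarith)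
  linarith
end

section
/- Consider one-dimensional Euler states U_e = (ρ_e, ρ_e u_e, E_e) and U_{e+1} = (ρ_{e+1}, ρ_{e+1} u_{e+1}, E_{e+1}) with ρ_e > 0 and ρ_{e+1} > 0, and let the density component of the Euler flux F(U) be ρu. Let λ > 0, Δt > 0, h > 0 with Δt λ / h ≤ 1/2, λ > |u_e|, and λ > |u_{e+1}|. Then the density component of the half-system update U_{p1} = U_e − (Δt/h)(F(U_{e+1}) − λ U_{e+1} − F(U_e) + λ U_e) satisfies the convex-combination identity ρ(U_{p1}) = ρ_e[1 − (Δt/h)(λ − u_e)] + ρ_{e+1}(Δt/h)(λ − u_{e+1}), both coefficients 1 − (Δt/h)(λ − u_e) and (Δt/h)(λ − u_{e+1}) are strictly positive, ρ(U_{p1}) > 0, and the normalized weights ρ_e[1 − (Δt/h)(λ − u_e)]/ρ(U_{p1}) and ρ_{e+1}(Δt/h)(λ − u_{e+1})/ρ(U_{p1}) are positive and sum to one. -/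
/-- the density component of the half-system update
`U_{p1} = U_e − (Δt/h)(F U_{e+1} − λ U_{e+1} − F U_e + λ U_e)` is a convex
combination `ρ_e[1 − (Δt/h)(λ − u_e)] + ρ_{e+1}(Δt/h)(λ − u_{e+1})` with
strictly positive coefficients; it is strictly positive, and the normalized
weights are positive and sum to one. -/
theorem half_update_density_convex_combination
    (ρe ρep ue uep Ee Eep lam Δt h : ℝ)
    (hρe : 0 < ρe) (hρep : 0 < ρep)
    (F : (Fin 3 → ℝ) → (Fin 3 → ℝ))
    (Ue Uep : Fin 3 → ℝ)
    (hUe : Ue = ![ρe, ρe * ue, Ee])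
    (hUep : Uep = ![ρep, ρep * uep, Eep])
    (hFe : F Ue 0 = ρe * ue)
    (hFep : F Uep 0 = ρep * uep)
    (hlam : 0 < lam) (hΔt : 0 < Δt) (hh : 0 < h)
    (hCFL : Δt * lam / h ≤ 1 / 2)
    (hle : |ue| < lam) (hlep : |uep| < lam)
    (Up1 : Fin 3 → ℝ)
    (hUp1 : Up1 = Ue - (Δt / h) • (F Uep - lam • Uep - F Ue + lam • Ue)) :
    Up1 0 = ρe * (1 - (Δt / h) * (lam - ue)) + ρep * ((Δt / h) * (lam - uep)) ∧
    0 < 1 - (Δt / h) * (lam - ue) ∧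
    0 < (Δt / h) * (lam - uep) ∧
    0 < Up1 0 ∧
    0 < ρe * (1 - (Δt / h) * (lam - ue)) / Up1 0 ∧
    0 < ρep * ((Δt / h) * (lam - uep)) / Up1 0 ∧
    ρe * (1 - (Δt / h) * (lam - ue)) / Up1 0 +
      ρep * ((Δt / h) * (lam - uep)) / Up1 0 = 1 := by
  have hν : 0 < Δt / h := div_pos hΔt hh
  have h1 : Up1 0 = ρe * (1 - (Δt / h) * (lam - ue)) + ρep * ((Δt / h) * (lam - uep)) := by
    simp only [hUp1, Pi.sub_apply, Pi.add_apply, Pi.smul_apply, smul_eq_mul]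
    rw [hFe, hFep, hUe, hUep]
    simp [Matrix.cons_val_zero]
    ring
  have habs_e := abs_lt.mp hle
  have habs_ep := abs_lt.mp hlep
  have hc2 : 0 < (Δt / h) * (lam - uep) :=
    mul_pos hν (by linarith [habs_ep.2])
  have hCFL' : Δt / h * lam ≤ 1 / 2 := by
    rw [div_mul_eq_mul_div]; exact hCFL
  have hc1 : 0 < 1 - (Δt / h) * (lam - ue) := by
    have h2 : (Δt / h) * (lam - ue) < (Δt / h) * (2 * lam) := by
      apply mul_lt_mul_of_pos_left _ hν
      linarith [habs_e.1]
    nlinarith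
  have hpos : 0 < Up1 0 := by
    rw [h1]
    positivity
  refine ⟨h1, hc1, hc2, hpos, div_pos (by positivity) hpos, div_pos (by positivity) hpos, ?_⟩
  rw [← add_div, ← h1, div_self (ne_of_gt hpos)]
end

section
/- Let γ ≥ 1, d ≥ 1, and let (α_k)_{k=1}^K be nonnegative reals with Σ_k α_k = 1. Let u_k ∈ ℝ^d and c_k ≥ 0 for each k, and set u = Σ_k α_k u_k. Then Σ_k α_k |u_k|² − |u|² ≥ 0, and defining c = √( Σ_k α_k c_k² + (γ(γ−1)/2)(Σ_k α_k |u_k|² − |u|²) ), the combined maximum characteristic speed satisfies |u| + c ≤ √(2 + γ(γ−1)) · max_k (|u_k| + c_k), where |·| denotes the Euclidean norm on ℝ^d. -/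
/-- combination rule for maximum characteristic speeds: for
`γ ≥ 1`, convex weights `α_k`, velocities `u_k ∈ ℝ^d`, and sound speeds
`c_k ≥ 0`, with `u = Σ α_k u_k`, one has `Σ α_k |u_k|² − |u|² ≥ 0`, and for
`c = √(Σ α_k c_k² + (γ(γ−1)/2)(Σ α_k |u_k|² − |u|²))` the combined maximum
characteristic speed satisfies
`|u| + c ≤ √(2 + γ(γ−1)) · max_k (|u_k| + c_k)`. -/
theorem combination_rule_characteristic_speed
    (γ : ℝ) (hγ : 1 ≤ γ) (d K : ℕ) (hd : 1 ≤ d) (hK : 0 < K)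
    (α : Fin K → ℝ) (hα : ∀ k, 0 ≤ α k) (hαsum : ∑ k, α k = 1)
    (u : Fin K → EuclideanSpace ℝ (Fin d))
    (c : Fin K → ℝ) (hc : ∀ k, 0 ≤ c k) :
    0 ≤ (∑ k, α k * ‖u k‖ ^ 2) - ‖∑ k, α k • u k‖ ^ 2 ∧
    ‖∑ k, α k • u k‖ +
        Real.sqrt ((∑ k, α k * c k ^ 2) +
          (γ * (γ - 1) / 2) * ((∑ k, α k * ‖u k‖ ^ 2) - ‖∑ k, α k • u k‖ ^ 2)) ≤
      Real.sqrt (2 + γ * (γ - 1)) *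
        (Finset.univ.sup' (Finset.univ_nonempty_iff.mpr ⟨⟨0, hK⟩⟩)
          fun k => ‖u k‖ + c k) := by
  set β : ℝ := γ * (γ - 1) / 2 with hβdef
  have hβ : 0 ≤ β := by
    have h1 : 0 ≤ γ - 1 := by linarith
    have h2 : 0 ≤ γ := by linarith
    positivity
  set A : ℝ := ‖∑ k, α k • u k‖ with hAdef
  have hA0 : 0 ≤ A := norm_nonneg _
  set S1 : ℝ := ∑ k, α k * ‖u k‖ ^ 2 with hS1
  set S2 : ℝ := ∑ k, α k * c k ^ 2 with hS2
  have hS1nn : 0 ≤ S1 := Finset.sum_nonneg fun k _ => mul_nonneg (hα k) (sq_nonneg _)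
  have hS2nn : 0 ≤ S2 := Finset.sum_nonneg fun k _ => mul_nonneg (hα k) (sq_nonneg _)
  -- Jensen: A ≤ ∑ α k * ‖u k‖
  have hAle : A ≤ ∑ k, α k * ‖u k‖ := by
    refine (norm_sum_le _ _).trans ?_
    apply le_of_eq
    refine Finset.sum_congr rfl fun k _ => ?_
    rw [norm_smul, Real.norm_eq_abs, abs_of_nonneg (hα k)]
  have hCS : (∑ k, α k * ‖u k‖) ^ 2 ≤ S1 := by
    have h := Finset.sum_mul_sq_le_sq_mul_sq Finset.univ
      (fun k => Real.sqrt (α k)) (fun k => Real.sqrt (α k) * ‖u k‖)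
    have e1 : ∀ k : Fin K, Real.sqrt (α k) * (Real.sqrt (α k) * ‖u k‖) = α k * ‖u k‖ := by
      intro k
      rw [← mul_assoc, Real.mul_self_sqrt (hα k)]
    have e2 : ∀ k : Fin K, Real.sqrt (α k) ^ 2 = α k := fun k => Real.sq_sqrt (hα k)
    have e3 : ∀ k : Fin K, (Real.sqrt (α k) * ‖u k‖) ^ 2 = α k * ‖u k‖ ^ 2 := by
      intro k
      rw [mul_pow, e2]
    simp only [e1, e2, e3] at h
    calc (∑ k, α k * ‖u k‖) ^ 2 ≤ (∑ k : Fin K, α k) * ∑ k, α k * ‖u k‖ ^ 2 := h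
      _ = S1 := by rw [hαsum, one_mul]
  have hAsq : A ^ 2 ≤ S1 := by
    have := pow_le_pow_left₀ hA0 hAle 2
    linarith [hCS]
  refine ⟨by linarith, ?_⟩
  set M : ℝ := Finset.univ.sup' (Finset.univ_nonempty_iff.mpr ⟨⟨0, hK⟩⟩)
      (fun k => ‖u k‖ + c k) with hMdef
  have hMle : ∀ k : Fin K, ‖u k‖ + c k ≤ M := fun k =>
    Finset.le_sup' (fun k => ‖u k‖ + c k) (Finset.mem_univ k)
  have hM0 : 0 ≤ M := le_trans (add_nonneg (norm_nonneg _) (hc _)) (hMle ⟨0, hK⟩)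
  -- S1 + S2 ≤ M²
  have hsum : S1 + S2 ≤ M ^ 2 := by
    have : S1 + S2 = ∑ k, α k * (‖u k‖ ^ 2 + c k ^ 2) := by
      rw [hS1, hS2, ← Finset.sum_add_distrib]
      exact Finset.sum_congr rfl fun k _ => by ring
    rw [this]
    calc ∑ k, α k * (‖u k‖ ^ 2 + c k ^ 2)
        ≤ ∑ k : Fin K, α k * M ^ 2 := by
          refine Finset.sum_le_sum fun k _ => ?_
          refine mul_le_mul_of_nonneg_left ?_ (hα k)
          nlinarith [hMle k, norm_nonneg (u k), hc k]
      _ = M ^ 2 := by rw [← Finset.sum_mul, hαsum, one_mul]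
  set cin : ℝ := S2 + β * (S1 - A ^ 2) with hcin
  have hcinnn : 0 ≤ cin := by nlinarith
  set cc : ℝ := Real.sqrt cin with hccdef
  have hcc0 : 0 ≤ cc := Real.sqrt_nonneg _
  have hccsq : cc ^ 2 = cin := Real.sq_sqrt hcinnn
  have key : (A + cc) ^ 2 ≤ (2 + 2 * β) * M ^ 2 := by
    have h2 : (A + cc) ^ 2 ≤ 2 * (A ^ 2 + cc ^ 2) := by nlinarith [sq_nonneg (A - cc)]
    have h3 : (1 - β) * A ^ 2 ≤ S1 := by nlinarith [sq_nonneg A]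
    nlinarith [mul_le_mul_of_nonneg_left hsum hβ]
  have h2β : 2 + γ * (γ - 1) = 2 + 2 * β := by rw [hβdef]; ring
  have final : A + cc ≤ Real.sqrt (2 + 2 * β) * M := by
    have h := Real.sqrt_le_sqrt key
    rwa [Real.sqrt_sq (add_nonneg hA0 hcc0), Real.sqrt_mul (by linarith : (0:ℝ) ≤ 2 + 2 * β), Real.sqrt_sq hM0] at h
  calc A + cc ≤ Real.sqrt (2 + 2 * β) * M := final
    _ = Real.sqrt (2 + γ * (γ - 1)) * M := by rw [h2β]
end

section
/- Let (a_x)_{x∈D} be a finite nonempty family of real numbers and let ā > 0. Define τ = min{0, min_{x∈D} a_x} and ε = τ/(τ − ā). Then 0 ≤ ε < 1, and for every x ∈ D, (1 − ε) a_x + ε ā ≥ 0. -/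
/-- linear-scaling limiter coefficient: for a finite nonempty
family `(a_x)_{x∈D}` of reals and `ā > 0`, with `τ = min{0, min_x a_x}` and
`ε = τ/(τ − ā)`, one has `0 ≤ ε < 1` and `(1 − ε) a_x + ε ā ≥ 0` for all `x`. -/
theorem limiter_coefficient_property
    {D : Type*} [Fintype D] [Nonempty D]
    (a : D → ℝ) (abar : ℝ) (habar : 0 < abar)
    (τ ε : ℝ)
    (hτ : τ = min 0 (Finset.univ.inf' Finset.univ_nonempty a))
    (hε : ε = τ / (τ - abar)) :
    0 ≤ ε ∧ ε < 1 ∧ ∀ x : D, 0 ≤ (1 - ε) * a x + ε * abar := by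
  have hτ0 : τ ≤ 0 := hτ ▸ min_le_left _ _
  have hden : τ - abar < 0 := by linarith
  have hε0 : 0 ≤ ε := by
    rw [hε, div_nonneg_iff]
    right; exact ⟨hτ0, hden.le⟩
  have hε1 : ε < 1 := by
    rw [hε, div_lt_one_of_neg hden]; linarith
  refine ⟨hε0, hε1, fun x => ?_⟩
  have hτa : τ ≤ a x := by
    rw [hτ]
    exact le_trans (min_le_right _ _) (Finset.inf'_le _ (Finset.mem_univ x))
  have hne : τ - abar ≠ 0 := hden.ne
  have hne2 : abar - τ ≠ 0 := by intro h; apply hne; linarith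
  have h1 : 1 - ε = abar / (abar - τ) := by
    rw [hε]; field_simp; ring
  have h2 : ε = -τ / (abar - τ) := by
    rw [hε]; rw [div_eq_div_iff hne (by linarith : (0:ℝ) < abar - τ).ne']; ring
  rw [h1, h2]
  have hpos : 0 < abar - τ := by linarith
  rw [div_mul_eq_mul_div, div_mul_eq_mul_div, ← add_div, le_div_iff₀ hpos]
  nlinarith
end
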